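/- The function P ↦ V_q(P) is a quadratic polynomial in P with strictly positive leading coefficient, and it attains its global minimum at the unique point P^⋄(q) := (1 − 1/ξ)·P_D + (1/ξ)·P_F(q); that is, for every real P ≠ P^⋄(q) one has V_q(P) > V_q(P^⋄(q)). -/

import Mathlib

set_option maxHeartbeats 1000000 in
/-- Proposition 4.2: the firm's stationary Stackelberg objective
`V_q(P) = (1/ρ)·(λH(P)² − P·H(P)) − (1/(4δρ))·(Y₀(P) + h)² + Y₀(P)·q + K_f·q²`
is a quadratic polynomial in `P` with strictly positive leading coefficient,
attaining its global minimum at the unique point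
`P⋄(q) = (1 − 1/ξ)·P_D + (1/ξ)·P_F(q)`. -/
theorem stmt_17 (ρ σ b γ δ lam η : ℝ) (hρ : 0 < ρ) (hσ : 0 < σ) (hb : 0 < b)
    (hγ : 0 < γ) (hδ : 0 < δ) (hlam : 0 < lam) (hη : 0 < η) (hρσ : σ ^ 2 < ρ)
    (θ c h π D q : ℝ)
    (Kc Kf : ℝ)
    (hKc : Kc = (γ / (2 * b ^ 2)) *
      (-(ρ - σ ^ 2) + Real.sqrt ((ρ - σ ^ 2) ^ 2 + 4 * b ^ 2 * η / γ)))
    (hKf : Kf = (δ / 2) * (-ρ + Real.sqrt (ρ ^ 2 + 4 * lam / δ)))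
    (H Y₀ V : ℝ → ℝ)
    (hH : ∀ P : ℝ, H P = D - (P + θ - ρ * c / b) / (2 * σ ^ 2 * Kc))
    (hY₀ : ∀ P : ℝ, Y₀ P =
      -(2 * lam * δ / (ρ * δ + Kf)) * H P + (δ * π - Kf * h) / (ρ * δ + Kf))
    (hV : ∀ P : ℝ, V P = (1 / ρ) * (lam * (H P) ^ 2 - P * H P)
      - (1 / (4 * δ * ρ)) * (Y₀ P + h) ^ 2 + Y₀ P * q + Kf * q ^ 2)
    (ξ PD PF Pdia : ℝ)
    (hξ : ξ = 2 + (lam / (σ ^ 2 * Kc)) * (1 - lam * δ / (ρ * δ + Kf) ^ 2))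
    (hPD : PD = (ρ * c / b - θ) + 2 * σ ^ 2 * Kc * D)
    (hPF : PF = (lam * δ / (ρ * δ + Kf)) * ((ρ * h + π) / (ρ * δ + Kf) - 2 * ρ * q))
    (hPdia : Pdia = (1 - 1 / ξ) * PD + (1 / ξ) * PF) :
    (∃ A B C : ℝ, 0 < A ∧ ∀ P : ℝ, V P = A * P ^ 2 + B * P + C) ∧
      ∀ P : ℝ, P ≠ Pdia → V Pdia < V P := by
  -- positivity of Kc
  have hKcpos : 0 < Kc := by
    have harg : 0 ≤ (ρ - σ ^ 2) ^ 2 + 4 * b ^ 2 * η / γ := by positivity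
    have ht2 : (Real.sqrt ((ρ - σ ^ 2) ^ 2 + 4 * b ^ 2 * η / γ)) ^ 2
        = (ρ - σ ^ 2) ^ 2 + 4 * b ^ 2 * η / γ := Real.sq_sqrt harg
    have ht0 : 0 ≤ Real.sqrt ((ρ - σ ^ 2) ^ 2 + 4 * b ^ 2 * η / γ) := Real.sqrt_nonneg _
    have hpos : 0 < 4 * b ^ 2 * η / γ := by positivity
    have : ρ - σ ^ 2 < Real.sqrt ((ρ - σ ^ 2) ^ 2 + 4 * b ^ 2 * η / γ) := by nlinarith
    rw [hKc]
    have : 0 < -(ρ - σ ^ 2) + Real.sqrt ((ρ - σ ^ 2) ^ 2 + 4 * b ^ 2 * η / γ) := by linarith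
    positivity
  -- positivity of Kf and its quadratic relation
  have hargf : 0 ≤ ρ ^ 2 + 4 * lam / δ := by positivity
  have hs2 : (Real.sqrt (ρ ^ 2 + 4 * lam / δ)) ^ 2 = ρ ^ 2 + 4 * lam / δ :=
    Real.sq_sqrt hargf
  have hs0 : 0 ≤ Real.sqrt (ρ ^ 2 + 4 * lam / δ) := Real.sqrt_nonneg _
  have hKfpos : 0 < Kf := by
    have hpos : 0 < 4 * lam / δ := by positivity
    have : ρ < Real.sqrt (ρ ^ 2 + 4 * lam / δ) := by nlinarith
    rw [hKf]
    have : 0 < -ρ + Real.sqrt (ρ ^ 2 + 4 * lam / δ) := by linarith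
    positivity
  have hs2' : (Real.sqrt (ρ ^ 2 + 4 * lam / δ)) ^ 2 * δ = ρ ^ 2 * δ + 4 * lam := by
    rw [hs2]; field_simp
  have hKfq : Kf ^ 2 + ρ * δ * Kf = lam * δ := by
    rw [hKf]; linear_combination (δ / 4) * hs2'
  have hR : 0 < ρ * δ + Kf := by positivity
  have hRne : (ρ * δ + Kf) ≠ 0 := hR.ne'
  have hσne : (σ : ℝ) ≠ 0 := hσ.ne'
  have hKcne : (Kc : ℝ) ≠ 0 := hKcpos.ne'
  have hρne : (ρ : ℝ) ≠ 0 := hρ.ne'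
  have hδne : (δ : ℝ) ≠ 0 := hδ.ne'
  -- positivity of ξ
  have hfrac : 1 - lam * δ / (ρ * δ + Kf) ^ 2 = ρ * δ / (ρ * δ + Kf) := by
    rw [eq_div_iff hRne]
    field_simp
    linear_combination hKfq
  have hξpos : 0 < ξ := by
    rw [hξ, hfrac]
    have : 0 < (lam / (σ ^ 2 * Kc)) * (ρ * δ / (ρ * δ + Kf)) := by positivity
    linarith
  have hξne : ξ ≠ 0 := hξpos.ne'
  -- quadratic coefficients
  set E : ℝ := D - (θ - ρ * c / b) / (2 * σ ^ 2 * Kc) with hE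
  set A2 : ℝ := lam / (ρ * (2 * σ ^ 2 * Kc) ^ 2) + 1 / (ρ * (2 * σ ^ 2 * Kc))
      - lam ^ 2 * δ / (ρ * (ρ * δ + Kf) ^ 2 * (2 * σ ^ 2 * Kc) ^ 2) with hA2
  set A1 : ℝ := -(2 * lam * E) / (ρ * (2 * σ ^ 2 * Kc)) - E / ρ
      - (lam / (ρ * (ρ * δ + Kf) * (2 * σ ^ 2 * Kc))) *
        (-(2 * lam * δ / (ρ * δ + Kf)) * E + (δ * π - Kf * h) / (ρ * δ + Kf) + h)
      + (2 * lam * δ / ((ρ * δ + Kf) * (2 * σ ^ 2 * Kc))) * q with hA1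
  set A0 : ℝ := lam * E ^ 2 / ρ
      - (1 / (4 * δ * ρ)) *
        (-(2 * lam * δ / (ρ * δ + Kf)) * E + (δ * π - Kf * h) / (ρ * δ + Kf) + h) ^ 2
      + (-(2 * lam * δ / (ρ * δ + Kf)) * E + (δ * π - Kf * h) / (ρ * δ + Kf)) * q
      + Kf * q ^ 2 with hA0
  clear_value E A2 A1 A0
  have hexp : ∀ P : ℝ, V P = A2 * P ^ 2 + A1 * P + A0 := by
    intro P
    rw [hV P, hY₀ P, hH P, hA2, hA1, hA0, hE]
    field_simp
    ring
  have h2A2 : 2 * A2 = ξ / (ρ * (2 * σ ^ 2 * Kc)) := by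
    rw [hA2, hξ]
    field_simp
    ring
  have hA2pos : 0 < A2 := by
    have : 0 < ξ / (ρ * (2 * σ ^ 2 * Kc)) := by positivity
    linarith
  -- vertex identity
  have hPdia2 : ξ * Pdia = (ξ - 1) * PD + PF := by
    rw [hPdia]; field_simp
  have hvert : 2 * A2 * Pdia + A1 = 0 := by
    have h0 : ξ * (2 * A2 * Pdia + A1) = 0 := by
      have h1 : ξ * (2 * A2 * Pdia) = 2 * A2 * ((ξ - 1) * PD + PF) := by
        rw [← hPdia2]; ring
      rw [mul_add, h1, hξ, hPD, hPF, hA2, hA1, hE]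
      field_simp
      ring
    rcases mul_eq_zero.mp h0 with h' | h'
    · exact absurd h' hξne
    · exact h'
  have key : ∀ P : ℝ, V P = A2 * (P - Pdia) ^ 2 + V Pdia := by
    intro P
    rw [hexp P, hexp Pdia]
    linear_combination (P - Pdia) * hvert
  refine ⟨⟨A2, A1, A0, hA2pos, hexp⟩, ?_⟩
  intro P hne
  have hx : P - Pdia ≠ 0 := sub_ne_zero.mpr hne
  have hsq : 0 < A2 * (P - Pdia) ^ 2 := by positivity
  have := key P
  linarith
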